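/- Let K ≥ 1 and N ≥ 1 be integers. For each i ∈ {1,…,N} let p̂_i and p̃_i be probability vectors in the (K−1)-simplex (i.e., p̂_{ik} ≥ 0, p̃_{ik} ≥ 0 and Σ_k p̂_{ik} = Σ_k p̃_{ik} = 1), and assume all entries p̂_{ik} and p̃_{ik} are strictly positive. Define the joint distribution matrix P_joint by P_joint^{(j,k)} = (1/N) Σ_{i=1}^N p̂_{ij} · p̃_{ik}. Let u be the uniform vector with u_k = 1/K for all k, and for probability vectors q with positive entries define the cross-entropy H(u, q) = −(1/K) Σ_{k=1}^K log q_k. Then the cross-entropy between the diagonal matrix (1/K)·I_K and P_joint, namely H((1/K)I_K, P_joint) = −(1/K) Σ_{k=1}^K log P_joint^{(k,k)}, satisfies log K ≤ H((1/K)I_K, P_joint) ≤ (1/N) Σ_{i=1}^N [ H(u, p̂_i) + H(u, p̃_i) ]. -/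

import Mathlib

lemma jensen_log {n : ℕ} (hn : 1 ≤ n) (x : Fin n → ℝ) (hx : ∀ i, 0 < x i) :
    (1 / (n : ℝ)) * ∑ i, Real.log (x i) ≤ Real.log ((1 / (n : ℝ)) * ∑ i, x i) := by
  have hn0 : (0 : ℝ) < n := by exact_mod_cast hn
  have h := (strictConcaveOn_log_Ioi.concaveOn).le_map_sum
    (t := Finset.univ) (w := fun _ : Fin n => 1 / (n : ℝ)) (p := x)
    (fun i _ => by positivity)
    (by rw [Finset.sum_const, Finset.card_univ, Fintype.card_fin, nsmul_eq_mul]; field_simp)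
    (fun i _ => hx i)
  simpa [smul_eq_mul, Finset.mul_sum] using h

/-- Proposition 1: for probability vectors `p̂ i` and `p̃ i` in the `(K-1)`-simplex with
strictly positive entries, the cross-entropy between the diagonal matrix `(1/K)·I_K` and the
joint matrix `P_joint` is bounded below by `log K` and above by the average of the
cross-entropies of the individual cluster assignments against the uniform vector. -/
theorem stmt_0 (K N : ℕ) (hK : 1 ≤ K) (hN : 1 ≤ N)
    (phat ptil : Fin N → Fin K → ℝ)
    (hphat_pos : ∀ i k, 0 < phat i k) (hptil_pos : ∀ i k, 0 < ptil i k)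
    (hphat_sum : ∀ i, ∑ k, phat i k = 1) (hptil_sum : ∀ i, ∑ k, ptil i k = 1)
    (P : Fin K → Fin K → ℝ)
    (hP : ∀ j k, P j k = (1 / (N : ℝ)) * ∑ i, phat i j * ptil i k) :
    Real.log K ≤ -(1 / (K : ℝ)) * ∑ k, Real.log (P k k) ∧
    -(1 / (K : ℝ)) * ∑ k, Real.log (P k k) ≤
      (1 / (N : ℝ)) * ∑ i,
        ((-(1 / (K : ℝ)) * ∑ k, Real.log (phat i k)) +
         (-(1 / (K : ℝ)) * ∑ k, Real.log (ptil i k))) := by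
  have hK0 : (0 : ℝ) < K := by exact_mod_cast hK
  have hN0 : (0 : ℝ) < N := by exact_mod_cast hN
  haveI : NeZero N := ⟨by omega⟩
  haveI : NeZero K := ⟨by omega⟩
  have hPpos : ∀ k, 0 < P k k := by
    intro k
    rw [hP]
    have : (0 : ℝ) < ∑ i, phat i k * ptil i k :=
      Finset.sum_pos (fun i _ => mul_pos (hphat_pos i k) (hptil_pos i k))
        Finset.univ_nonempty
    positivity
  constructor
  · -- lower bound
    have hJ := jensen_log hK (fun k => P k k) hPpos
    have hsum_le : ∑ k, P k k ≤ 1 := by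
      have heq : ∑ k, P k k = (1 / (N : ℝ)) * ∑ i, ∑ k, phat i k * ptil i k := by
        simp only [hP]
        rw [← Finset.mul_sum, Finset.sum_comm]
      rw [heq]
      have h1 : ∀ i : Fin N, ∑ k, phat i k * ptil i k ≤ 1 := by
        intro i
        calc ∑ k, phat i k * ptil i k ≤ ∑ k, phat i k * 1 := by
              apply Finset.sum_le_sum
              intro k _
              have : ptil i k ≤ 1 := by
                have := Finset.single_le_sum (f := ptil i)
                  (fun j _ => (hptil_pos i j).le) (Finset.mem_univ k)
                linarith [hptil_sum i]
              exact mul_le_mul_of_nonneg_left this (hphat_pos i k).le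
          _ = 1 := by simp [hphat_sum i]
      calc (1 / (N : ℝ)) * ∑ i, ∑ k, phat i k * ptil i k
          ≤ (1 / (N : ℝ)) * ∑ i : Fin N, (1 : ℝ) := by
            apply mul_le_mul_of_nonneg_left _ (by positivity)
            exact Finset.sum_le_sum fun i _ => h1 i
        _ = 1 := by field_simp; simp
    have hlog : Real.log ((1 / (K : ℝ)) * ∑ k, P k k) ≤ Real.log (1 / (K : ℝ)) := by
      apply Real.log_le_log
      · have : (0 : ℝ) < ∑ k, P k k :=
          Finset.sum_pos (fun k _ => hPpos k) Finset.univ_nonempty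
        positivity
      · calc (1 / (K : ℝ)) * ∑ k, P k k ≤ (1 / (K : ℝ)) * 1 :=
              mul_le_mul_of_nonneg_left hsum_le (by positivity)
          _ = 1 / (K : ℝ) := mul_one _
    have hli : Real.log (1 / (K : ℝ)) = -Real.log K := by
      rw [one_div, Real.log_inv]
    nlinarith [hJ, hlog]
  · -- upper bound
    have key : ∀ k : Fin K, (1 / (N : ℝ)) * ∑ i, (Real.log (phat i k) + Real.log (ptil i k))
        ≤ Real.log (P k k) := by
      intro k
      have hj := jensen_log hN (fun i => phat i k * ptil i k)
        (fun i => mul_pos (hphat_pos i k) (hptil_pos i k))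
      rw [hP]
      refine le_trans (le_of_eq ?_) hj
      congr 1
      apply Finset.sum_congr rfl
      intro i _
      rw [Real.log_mul (hphat_pos i k).ne' (hptil_pos i k).ne']
    have rhs_eq : (1 / (N : ℝ)) * ∑ i,
        ((-(1 / (K : ℝ)) * ∑ k, Real.log (phat i k)) +
         (-(1 / (K : ℝ)) * ∑ k, Real.log (ptil i k)))
        = -(1 / (K : ℝ)) * ∑ k, (1 / (N : ℝ)) * ∑ i,
            (Real.log (phat i k) + Real.log (ptil i k)) := by
      calc (1 / (N : ℝ)) * ∑ i,
            ((-(1 / (K : ℝ)) * ∑ k, Real.log (phat i k)) +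
             (-(1 / (K : ℝ)) * ∑ k, Real.log (ptil i k)))
          = ∑ i, ∑ k, (-(1 / (K : ℝ)) *
              ((1 / (N : ℝ)) * (Real.log (phat i k) + Real.log (ptil i k)))) := by
            rw [Finset.mul_sum]
            refine Finset.sum_congr rfl fun i _ => ?_
            rw [show (1 / (N : ℝ)) * ((-(1 / (K : ℝ)) * ∑ k, Real.log (phat i k)) +
                (-(1 / (K : ℝ)) * ∑ k, Real.log (ptil i k))) =
                (-(1 / (K : ℝ)) * (1 / (N : ℝ))) *
                  ((∑ k, Real.log (phat i k)) + ∑ k, Real.log (ptil i k)) from by ring,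
              ← Finset.sum_add_distrib, Finset.mul_sum]
            exact Finset.sum_congr rfl fun k _ => by ring
        _ = ∑ k, ∑ i, (-(1 / (K : ℝ)) *
              ((1 / (N : ℝ)) * (Real.log (phat i k) + Real.log (ptil i k)))) :=
            Finset.sum_comm
        _ = -(1 / (K : ℝ)) * ∑ k, (1 / (N : ℝ)) * ∑ i,
              (Real.log (phat i k) + Real.log (ptil i k)) := by
            simp only [Finset.mul_sum]
    rw [rhs_eq]
    have hsum := Finset.sum_le_sum (s := Finset.univ) (fun k _ => key k)
    have hc : -(1 / (K : ℝ)) ≤ 0 := by simp [le_of_lt, hK0]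
    exact mul_le_mul_of_nonpos_left hsum hc
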